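/- For any ring R and n ≥ 1, the zeroth Hochschild homology of the matrix ring Mat(n, R) is isomorphic to the zeroth Hochschild homology of R: Mat(n,R)/[Mat(n,R), Mat(n,R)] ≅ R/[R,R], with the isomorphism induced by the sum of diagonal entries. -/

import Mathlib

/-- The additive subgroup `[S,S]` of a ring `S` generated by all commutators. -/
def commutatorAddSubgroup (S : Type*) [Ring S] : AddSubgroup S :=
  AddSubgroup.closure { x | ∃ a b : S, x = a * b - b * a }

/-- The zeroth Hochschild homology of a ring `S`, `HH₀(S) = S/[S,S]`. -/
abbrev HH0Ring (S : Type*) [Ring S] := S ⧸ commutatorAddSubgroup S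

lemma comm_mem {S : Type*} [Ring S] (a b : S) :
    a * b - b * a ∈ commutatorAddSubgroup S :=
  AddSubgroup.subset_closure ⟨a, b, rfl⟩

/-- `stdBasisMatrix i j` as an additive monoid hom in the entry. -/
def sbHom {R : Type*} [Ring R] {n : ℕ} (i j : Fin n) :
    R →+ Matrix (Fin n) (Fin n) R where
  toFun := Matrix.single i j
  map_zero' := Matrix.single_zero i j
  map_add' := Matrix.single_add i j

lemma trace_comm_mem {R : Type*} [Ring R] {n : ℕ}
    (A B : Matrix (Fin n) (Fin n) R) :
    Matrix.trace (A * B - B * A) ∈ commutatorAddSubgroup R := by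
  have h : Matrix.trace (A * B - B * A)
      = ∑ i : Fin n, ∑ j : Fin n, (A i j * B j i - B j i * A i j) := by
    rw [Matrix.trace_sub]
    unfold Matrix.trace
    simp only [Matrix.diag, Matrix.mul_apply, Finset.sum_sub_distrib]
    congr 1
    rw [Finset.sum_comm]
  rw [h]
  exact sum_mem fun i _ => sum_mem fun j _ => comm_mem _ _

/-- For any ring `R` and `n ≥ 1`, `HH₀(Mat(n,R)) ≅ HH₀(R)`, the isomorphism being
induced by the sum of diagonal entries (the trace). -/
theorem HH0_matrix_iso (R : Type*) [Ring R] (n : ℕ) (hn : 1 ≤ n) :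
    ∃ e : HH0Ring (Matrix (Fin n) (Fin n) R) ≃+ HH0Ring R,
      ∀ M : Matrix (Fin n) (Fin n) R,
        e (QuotientAddGroup.mk M) = QuotientAddGroup.mk (Matrix.trace M) := by
  have h0 : (0 : ℕ) < n := hn
  set z : Fin n := ⟨0, h0⟩ with hz
  -- forward map
  set f : Matrix (Fin n) (Fin n) R →+ HH0Ring R :=
    (QuotientAddGroup.mk' (commutatorAddSubgroup R)).comp (Matrix.traceAddMonoidHom (Fin n) R)
    with hf
  have hfker : ∀ x ∈ commutatorAddSubgroup (Matrix (Fin n) (Fin n) R), f x = 0 := by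
    intro x hx
    induction hx using AddSubgroup.closure_induction with
    | mem y hy =>
      obtain ⟨A, B, rfl⟩ := hy
      have h1 : f (A * B - B * A)
          = QuotientAddGroup.mk (Matrix.trace (A * B - B * A)) := rfl
      rw [h1, QuotientAddGroup.eq_zero_iff]
      exact trace_comm_mem A B
    | zero => simp
    | add a b _ _ ha hb => rw [map_add, ha, hb, add_zero]
    | neg a _ ha => rw [map_neg, ha, neg_zero]
  -- backward map
  set g : R →+ HH0Ring (Matrix (Fin n) (Fin n) R) :=
    (QuotientAddGroup.mk' (commutatorAddSubgroup (Matrix (Fin n) (Fin n) R))).comp (sbHom z z)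
    with hg
  have hgker : ∀ x ∈ commutatorAddSubgroup R, g x = 0 := by
    intro x hx
    induction hx using AddSubgroup.closure_induction with
    | mem y hy =>
      obtain ⟨a, b, rfl⟩ := hy
      have h2 : Matrix.single z z (a * b - b * a)
          = Matrix.single z z a * Matrix.single z z b
            - Matrix.single z z b * Matrix.single z z a := by
        rw [Matrix.single_mul_single_same, Matrix.single_mul_single_same]
        exact map_sub (sbHom z z) (a * b) (b * a)
      have h1 : g (a * b - b * a)
          = QuotientAddGroup.mk (Matrix.single z z (a * b - b * a)) := rfl
      rw [h1, h2, QuotientAddGroup.eq_zero_iff]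
      exact comm_mem _ _
    | zero => simp
    | add a b _ _ ha hb => rw [map_add, ha, hb, add_zero]
    | neg a _ ha => rw [map_neg, ha, neg_zero]
  set F := QuotientAddGroup.lift _ f hfker with hF
  set G := QuotientAddGroup.lift _ g hgker with hG
  -- key: M ≡ stdBasisMatrix z z (trace M) mod commutators
  have key : ∀ M : Matrix (Fin n) (Fin n) R,
      M - Matrix.single z z (Matrix.trace M) ∈
        commutatorAddSubgroup (Matrix (Fin n) (Fin n) R) := by
    intro M
    have htr : Matrix.single z z (Matrix.trace M)
        = ∑ i : Fin n, Matrix.single z z (M i i) := by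
      show sbHom z z (∑ i : Fin n, M i i) = _
      rw [map_sum]
      rfl
    nth_rewrite 1 [Matrix.matrix_eq_sum_single M]
    rw [htr, ← Finset.sum_sub_distrib]
    refine sum_mem fun i _ => ?_
    have hsplit : (∑ j : Fin n, Matrix.single i j (M i j))
          - Matrix.single z z (M i i)
        = (∑ j ∈ Finset.univ.erase i, Matrix.single i j (M i j))
          + (Matrix.single i i (M i i) - Matrix.single z z (M i i)) := by
      rw [← Finset.sum_erase_add _ _ (Finset.mem_univ i)]
      abel
    rw [hsplit]
    refine AddSubgroup.add_mem _ (sum_mem fun j hj => ?_) ?_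
    · -- i ≠ j off-diagonal commutator: E_ij(r) = [E_ii(r), E_ij(1)]
      have hij : j ≠ i := Finset.ne_of_mem_erase hj
      have h3 : Matrix.single i j (M i j)
          = Matrix.single i i (M i j) * Matrix.single i j (1 : R)
            - Matrix.single i j (1 : R) * Matrix.single i i (M i j) := by
        rw [Matrix.single_mul_single_same, Matrix.single_mul_single_of_ne (h := hij),
          mul_one, sub_zero]
      rw [h3]
      exact comm_mem _ _
    · -- E_ii(r) - E_zz(r) = [E_iz(r), E_zi(1)]
      have h4 : Matrix.single i i (M i i) - Matrix.single z z (M i i)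
          = Matrix.single i z (M i i) * Matrix.single z i (1 : R)
            - Matrix.single z i (1 : R) * Matrix.single i z (M i i) := by
        rw [Matrix.single_mul_single_same, Matrix.single_mul_single_same,
          mul_one, one_mul]
      rw [h4]
      exact comm_mem _ _
  refine ⟨{ toFun := F, invFun := G,
            left_inv := ?_, right_inv := ?_,
            map_add' := map_add F }, fun M => rfl⟩
  · intro x
    induction x using QuotientAddGroup.induction_on with
    | H M =>
      show G (QuotientAddGroup.mk (Matrix.trace M)) = _
      show QuotientAddGroup.mk (Matrix.single z z (Matrix.trace M))
        = QuotientAddGroup.mk M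
      rw [QuotientAddGroup.eq]
      simpa [neg_add_eq_sub] using key M
  · intro x
    induction x using QuotientAddGroup.induction_on with
    | H r =>
      show F (QuotientAddGroup.mk (Matrix.single z z r)) = _
      show QuotientAddGroup.mk (Matrix.trace (Matrix.single z z r))
        = QuotientAddGroup.mk r
      rw [Matrix.trace_single_eq_same]
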